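/- Suppose the boundary parameters satisfy, componentwise, β > 0, λ < 0, β + T·b + λ > 0, γ < 0, μ > 0, and γ + T·c + μ < 0, with T > 0. Then P ≡ 0 is a feasible solution of M-CLP* with objective value 0, it is optimal, i.e. every feasible solution P of M-CLP* satisfies z*(P) ≥ 0, and it is the unique optimal solution: any feasible P with z*(P) = 0 satisfies P(s) = 0 for all s ∈ [0,T]. -/

import Mathlib

open MeasureTheory Filter

/-- A feasible solution of M-CLP*. -/
def DualFeasible {K J : ℕ} (A : Matrix (Fin K) (Fin J) ℝ) (c γ μ : Fin J → ℝ) (T : ℝ)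
    (P : ℝ → Fin K → ℝ) : Prop :=
  (∀ k, MonotoneOn (fun s => P s k) (Set.Icc 0 T)) ∧
  (∀ k, ∀ s ∈ Set.Ico (0:ℝ) T,
    Tendsto (fun r => P r k) (nhdsWithin s (Set.Ioi s)) (nhds (P s k))) ∧
  (∀ k, 0 ≤ P 0 k) ∧
  (∀ s ∈ Set.Ico (0:ℝ) T, ∀ j, γ j + s * c j ≤ A.transpose.mulVec (P s) j) ∧
  (∀ j, γ j + T * c j + μ j ≤ A.transpose.mulVec (P T) j)

/-- `ν i` is the Lebesgue–Stieltjes measure on `[0,T]` of the (right-continuous,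
nondecreasing) function `F · i`, with the convention `F (0-) i = 0`. -/
def LSFamily {I : Type*} (T : ℝ) (F : ℝ → I → ℝ) (ν : I → Measure ℝ) : Prop :=
  ∀ i, ν i (Set.Icc 0 T)ᶜ = 0 ∧
    ∀ x ∈ Set.Icc (0:ℝ) T, ν i (Set.Icc 0 x) = ENNReal.ofReal (F x i)

/-- The M-CLP* objective `z*(P) = λᵀP(0) + Σ_k ∫_{[0,T]} (β_k + (T-s)b_k) dP_k(s)`,
the measures `dP_k` being given by `ν`. -/
noncomputable def zDual {K : ℕ} (b β lam : Fin K → ℝ) (T : ℝ) (P : ℝ → Fin K → ℝ)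
    (ν : Fin K → Measure ℝ) : ℝ :=
  (∑ k, lam k * P 0 k) + ∑ k, ∫ s in Set.Icc (0:ℝ) T, (β k + (T - s) * b k) ∂(ν k)

/-- Under the sign conditions on the boundary parameters, `P ≡ 0` is a feasible
solution of M-CLP* with objective value `0`, it is optimal, and it is the unique
optimal solution. -/

lemma key_bound (βk bk lamk T : ℝ) (hT : 0 < T) (hβ : 0 < βk) (hlam : lamk < 0)
    (hβl : 0 < βk + T * bk + lamk)
    (ν : Measure ℝ) (P : ℝ → ℝ)
    (hc : ν (Set.Icc 0 T)ᶜ = 0)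
    (hx : ∀ x ∈ Set.Icc (0:ℝ) T, ν (Set.Icc 0 x) = ENNReal.ofReal (P x))
    (hP0 : 0 ≤ P 0) :
    (βk + T * bk + lamk) * P 0 + min βk (βk + T * bk) * (ν (Set.Ioc 0 T)).toReal
      ≤ lamk * P 0 + ∫ s in Set.Icc (0:ℝ) T, (βk + (T - s) * bk) ∂ν := by
  have hβT : 0 < βk + T * bk := by linarith
  -- finiteness
  have hIccT : ν (Set.Icc 0 T) = ENNReal.ofReal (P T) :=
    hx T ⟨le_of_lt hT, le_refl T⟩
  have hfin : IsFiniteMeasure ν := by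
    constructor
    calc ν Set.univ ≤ ν (Set.Icc 0 T) + ν (Set.Icc 0 T)ᶜ := by
          rw [← Set.union_compl_self (Set.Icc 0 T)]; exact measure_union_le _ _
      _ < ⊤ := by rw [hIccT, hc, add_zero]; exact ENNReal.ofReal_lt_top
  set f : ℝ → ℝ := fun s => βk + (T - s) * bk with hf
  have hcont : Continuous f := by fun_prop
  have hint : IntegrableOn f (Set.Icc 0 T) ν :=
    hcont.continuousOn.integrableOn_compact isCompact_Icc
  -- split the integral
  have hsplit : Set.Icc (0:ℝ) T = {(0:ℝ)} ∪ Set.Ioc 0 T := by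
    rw [← Set.Icc_self (0:ℝ), Set.Icc_union_Ioc_eq_Icc le_rfl hT.le]
  have hdisj : Disjoint {(0:ℝ)} (Set.Ioc (0:ℝ) T) := by
    simp [Set.disjoint_left]
  have hint1 : IntegrableOn f {(0:ℝ)} ν := hint.mono_set (by rw [hsplit]; exact Set.subset_union_left)
  have hint2 : IntegrableOn f (Set.Ioc 0 T) ν := hint.mono_set (by rw [hsplit]; exact Set.subset_union_right)
  have heq : ∫ s in Set.Icc (0:ℝ) T, f s ∂ν
      = (∫ s in ({0} : Set ℝ), f s ∂ν) + ∫ s in Set.Ioc (0:ℝ) T, f s ∂ν := by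
    rw [hsplit]; exact setIntegral_union hdisj measurableSet_Ioc hint1 hint2
  -- integral over {0}
  have hν0 : ν {0} = ENNReal.ofReal (P 0) := by
    have := hx 0 ⟨le_rfl, hT.le⟩
    simpa using this
  have h0 : (∫ s in ({0} : Set ℝ), f s ∂ν) = (βk + T * bk) * P 0 := by
    rw [Measure.restrict_singleton, integral_smul_measure, integral_dirac, hν0,
      ENNReal.toReal_ofReal hP0]
    simp [hf]
    ring
  -- integral over Ioc: lower bound by min
  have hmin : ∀ x ∈ Set.Ioc (0:ℝ) T, min βk (βk + T * bk) ≤ f x := by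
    intro x hx'
    rcases le_or_gt 0 bk with hb | hb
    · calc min βk (βk + T * bk) ≤ βk := min_le_left _ _
        _ ≤ f x := by simp only [hf]; nlinarith [hx'.1, hx'.2]
    · calc min βk (βk + T * bk) ≤ βk + T * bk := min_le_right _ _
        _ ≤ f x := by simp only [hf]; nlinarith [hx'.1, hx'.2]
  have hIoc : min βk (βk + T * bk) * (ν (Set.Ioc 0 T)).toReal
      ≤ ∫ s in Set.Ioc (0:ℝ) T, f s ∂ν :=
    by
      have h := setIntegral_ge_of_const_le measurableSet_Ioc (measure_ne_top ν _) hmin hint2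
      rw [smul_eq_mul, mul_comm] at h
      exact h
  rw [heq, h0]
  nlinarith [hIoc]

theorem zero_is_unique_optimal_mclpStar {K J : ℕ}
    (A : Matrix (Fin K) (Fin J) ℝ) (b β lam : Fin K → ℝ) (c γ μ : Fin J → ℝ) (T : ℝ)
    (hT : 0 < T)
    (hβ : ∀ k, 0 < β k) (hlam : ∀ k, lam k < 0) (hβl : ∀ k, 0 < β k + T * b k + lam k)
    (hγ : ∀ j, γ j < 0) (hμ : ∀ j, 0 < μ j) (hγm : ∀ j, γ j + T * c j + μ j < 0) :
    DualFeasible A c γ μ T (fun _ : ℝ => (0 : Fin K → ℝ)) ∧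
    (∀ ν : Fin K → Measure ℝ, LSFamily T (fun _ : ℝ => (0 : Fin K → ℝ)) ν →
      zDual b β lam T (fun _ : ℝ => (0 : Fin K → ℝ)) ν = 0) ∧
    (∀ (P : ℝ → Fin K → ℝ) (ν : Fin K → Measure ℝ),
      DualFeasible A c γ μ T P → LSFamily T P ν →
      0 ≤ zDual b β lam T P ν) ∧
    (∀ (P : ℝ → Fin K → ℝ) (ν : Fin K → Measure ℝ),
      DualFeasible A c γ μ T P → LSFamily T P ν →
      zDual b β lam T P ν = 0 → ∀ s ∈ Set.Icc (0:ℝ) T, ∀ k, P s k = 0) := by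

  constructor
  · -- feasibility of 0
    refine ⟨fun k => monotoneOn_const, fun k s _ => tendsto_const_nhds,
      fun k => le_refl 0, ?_, ?_⟩
    · intro s hs j
      simp only [Matrix.mulVec_zero, Pi.zero_apply]
      have h1 : γ j + T * c j < 0 := by linarith [hγm j, hμ j]
      nlinarith [hs.1, hs.2.le, hγ j]
    · intro j
      simp only [Matrix.mulVec_zero, Pi.zero_apply]
      exact (hγm j).le
  have hzero : ∀ (ν : Fin K → Measure ℝ),
      LSFamily T (fun _ : ℝ => (0 : Fin K → ℝ)) ν →
      zDual b β lam T (fun _ : ℝ => (0 : Fin K → ℝ)) ν = 0 := by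
    intro ν hν
    have hν0 : ∀ k, ν k = 0 := by
      intro k
      obtain ⟨hc, hx⟩ := hν k
      have h1 : ν k (Set.Icc 0 T) = 0 := by
        rw [hx T ⟨hT.le, le_rfl⟩]; simp
      have : ν k Set.univ = 0 := by
        have hle : ν k Set.univ ≤ ν k (Set.Icc 0 T) + ν k (Set.Icc 0 T)ᶜ := by
          rw [← Set.union_compl_self (Set.Icc 0 T)]; exact measure_union_le _ _
        rw [h1, hc, add_zero] at hle
        exact le_antisymm hle (by simp)
      exact Measure.measure_univ_eq_zero.mp this
    unfold zDual
    simp [hν0]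
  refine ⟨hzero, ?_⟩
  -- the per-component lower bound, packaged
  have hterm : ∀ (P : ℝ → Fin K → ℝ) (ν : Fin K → Measure ℝ),
      DualFeasible A c γ μ T P → LSFamily T P ν → ∀ k,
      (β k + T * b k + lam k) * P 0 k
        + min (β k) (β k + T * b k) * (ν k (Set.Ioc 0 T)).toReal
      ≤ lam k * P 0 k + ∫ s in Set.Icc (0:ℝ) T, (β k + (T - s) * b k) ∂(ν k) := by
    intro P ν hP hν k
    exact key_bound (β k) (b k) (lam k) T hT (hβ k) (hlam k) (hβl k) (ν k)
      (fun x => P x k) (hν k).1 (hν k).2 (hP.2.2.1 k)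
  have htermpos : ∀ (P : ℝ → Fin K → ℝ) (ν : Fin K → Measure ℝ), ∀ k,
      0 ≤ (β k + T * b k + lam k) * P 0 k
        + min (β k) (β k + T * b k) * (ν k (Set.Ioc 0 T)).toReal → True := fun _ _ _ _ => trivial
  have hzsum : ∀ (P : ℝ → Fin K → ℝ) (ν : Fin K → Measure ℝ),
      zDual b β lam T P ν
        = ∑ k, (lam k * P 0 k + ∫ s in Set.Icc (0:ℝ) T, (β k + (T - s) * b k) ∂(ν k)) := by
    intro P ν
    unfold zDual
    rw [Finset.sum_add_distrib]
  have hLnonneg : ∀ (P : ℝ → Fin K → ℝ) (ν : Fin K → Measure ℝ),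
      DualFeasible A c γ μ T P → ∀ k,
      0 ≤ (β k + T * b k + lam k) * P 0 k
        + min (β k) (β k + T * b k) * (ν k (Set.Ioc 0 T)).toReal := by
    intro P ν hP k
    have h1 : 0 ≤ (β k + T * b k + lam k) * P 0 k :=
      mul_nonneg (hβl k).le (hP.2.2.1 k)
    have h2 : 0 ≤ min (β k) (β k + T * b k) * (ν k (Set.Ioc 0 T)).toReal :=
      mul_nonneg (le_min (hβ k).le (by nlinarith [hβl k, hlam k])) ENNReal.toReal_nonneg
    linarith
  constructor
  · -- optimality
    intro P ν hP hν
    rw [hzsum P ν]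
    apply Finset.sum_nonneg
    intro k _
    exact le_trans (hLnonneg P ν hP k) (hterm P ν hP hν k)
  · -- uniqueness
    intro P ν hP hν hz s hs k
    rw [hzsum P ν] at hz
    have hterm0 : ∀ k, lam k * P 0 k
        + ∫ s in Set.Icc (0:ℝ) T, (β k + (T - s) * b k) ∂(ν k) = 0 := by
      intro k
      have := (Finset.sum_eq_zero_iff_of_nonneg (fun k _ =>
        le_trans (hLnonneg P ν hP k) (hterm P ν hP hν k))).mp hz k (Finset.mem_univ k)
      exact this
    have hL0 : (β k + T * b k + lam k) * P 0 k
        + min (β k) (β k + T * b k) * (ν k (Set.Ioc 0 T)).toReal = 0 := by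
      have h1 := hterm P ν hP hν k
      rw [hterm0 k] at h1
      exact le_antisymm h1 (hLnonneg P ν hP k)
    have h1 : 0 ≤ (β k + T * b k + lam k) * P 0 k :=
      mul_nonneg (hβl k).le (hP.2.2.1 k)
    have hminpos : 0 < min (β k) (β k + T * b k) :=
      lt_min (hβ k) (by nlinarith [hβl k, hlam k])
    have h2 : 0 ≤ min (β k) (β k + T * b k) * (ν k (Set.Ioc 0 T)).toReal :=
      mul_nonneg hminpos.le ENNReal.toReal_nonneg
    have hP00 : P 0 k = 0 := by
      have : (β k + T * b k + lam k) * P 0 k = 0 := by linarith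
      have := mul_eq_zero.mp this
      rcases this with h | h
      · exact absurd h (ne_of_gt (hβl k))
      · exact h
    have hIoc0 : ν k (Set.Ioc 0 T) = 0 := by
      have hm : min (β k) (β k + T * b k) * (ν k (Set.Ioc 0 T)).toReal = 0 := by linarith
      have htr : (ν k (Set.Ioc 0 T)).toReal = 0 := by
        rcases mul_eq_zero.mp hm with h | h
        · exact absurd h (ne_of_gt hminpos)
        · exact h
      have hfin : ν k (Set.Ioc 0 T) ≠ ⊤ := by
        have hle : ν k (Set.Ioc 0 T) ≤ ν k (Set.Icc 0 T) :=
          measure_mono Set.Ioc_subset_Icc_self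
        rw [(hν k).2 T ⟨hT.le, le_rfl⟩] at hle
        exact ne_top_of_le_ne_top ENNReal.ofReal_ne_top hle
      exact (ENNReal.toReal_eq_zero_iff _).mp htr |>.resolve_right hfin
    -- now P s k = 0
    have hν0 : ν k {0} = ENNReal.ofReal (P 0 k) := by
      have := (hν k).2 0 ⟨le_rfl, hT.le⟩
      simpa using this
    have hsle : ν k (Set.Icc 0 s) ≤ ν k ({0} ∪ Set.Ioc 0 T) := by
      apply measure_mono
      intro x hx
      rcases eq_or_lt_of_le hx.1 with h | h
      · exact Or.inl (by simp [← h])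
      · exact Or.inr ⟨h, le_trans hx.2 hs.2⟩
    have : ν k (Set.Icc 0 s) = 0 := by
      have := le_trans hsle (measure_union_le _ _)
      rw [hν0, hP00, hIoc0] at this
      simpa using this
    rw [(hν k).2 s hs] at this
    have hle : P s k ≤ 0 := by
      by_contra h
      push_neg at h
      rw [ENNReal.ofReal_eq_zero] at this
      linarith
    have hge : 0 ≤ P s k := by
      have := hP.1 k (Set.left_mem_Icc.mpr hT.le) hs hs.1
      simpa [hP00] using this
    linarith
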